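/- Let $2 \leq d < \omega$ and suppose that for every countable coloring of any product of $d$ perfect Polish spaces there is a monochromatic somewhere dense grid (i.e., $\mathsf{PG}_d(\aleph_0)$ holds). Then $2^{\aleph_0} \geq \aleph_d$. -/

import Mathlib

open Cardinal Ordinal Set Function

/-- Kuratowski–Sierpiński style lemma: if `#X ≤ ℵ_n` then there is a countable
coloring of `X^(n+1)` with no monochromatic box all of whose sides are infinite. -/
private lemma key_coloring : ∀ (n : ℕ) (X : Type), #X ≤ Cardinal.aleph n →
    ∃ c : (Fin (n + 1) → X) → ℕ, ∀ Y : Fin (n + 1) → Set X, (∀ i, (Y i).Infinite) →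
      ∀ j : ℕ, ∃ f : Fin (n + 1) → X, (∀ i, f i ∈ Y i) ∧ c f ≠ j := by
  intro n
  induction n with
  | zero =>
      intro X hX
      rw [Nat.cast_zero, aleph_zero, mk_le_aleph0_iff] at hX
      obtain ⟨e, he⟩ := Countable.exists_injective_nat X
      refine ⟨fun f => e (f 0), fun Y hY j => ?_⟩
      obtain ⟨y, hy, y', hy', hne⟩ := (hY 0).nontrivial
      rcases eq_or_ne (e y) j with h | h
      · refine ⟨fun _ => y', fun i => ?_, fun hh => hne (he (hh.trans h.symm)).symm⟩
        have h0 : i = 0 := Subsingleton.elim (α := Fin 1) i 0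
        rw [h0]; exact hy'
      · refine ⟨fun _ => y, fun i => ?_, h⟩
        have h0 : i = 0 := Subsingleton.elim (α := Fin 1) i 0
        rw [h0]; exact hy
  | succ n IH =>
      intro X hX
      classical
      rw [Nat.cast_succ] at hX
      have hsucc : Cardinal.aleph ((n : Ordinal) + 1) = Order.succ (Cardinal.aleph (n : Ordinal)) := by
        rw [Ordinal.add_one_eq_succ, aleph_succ]
      obtain ⟨φ⟩ : Nonempty (X ↪ (Cardinal.aleph ((n : Ordinal) + 1)).ord.ToType) := by
        rw [← Cardinal.le_def, mk_toType, card_ord]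
        exact hX
      have hW : ∀ t : (Cardinal.aleph ((n : Ordinal) + 1)).ord.ToType,
          #{b : X // φ b ≤ t} ≤ Cardinal.aleph (n : Ordinal) := by
        intro t
        have h1 : #{b : X // φ b ≤ t} ≤ #(Set.Iio t) + 1 := by
          refine le_trans (mk_le_of_injective (f := fun b => (⟨φ b.1, b.2⟩ : Set.Iic t))
            (fun a b hab => Subtype.ext (φ.injective (congrArg Subtype.val hab)))) ?_
          rw [← Set.Iio_insert]
          exact mk_insert_le
        have h3 : #(Set.Iio t) < Cardinal.aleph ((n : Ordinal) + 1) := by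
          have hcard : #(Set.Iio t)
              = (@Ordinal.typein _ (· < ·) isWellOrder_lt t).card := rfl
          rw [hcard, ← Cardinal.lt_ord]
          exact typein_lt_self t
        have h4 : #(Set.Iio t) ≤ Cardinal.aleph (n : Ordinal) :=
          Order.lt_succ_iff.mp (lt_of_lt_of_eq h3 hsucc)
        calc #{b : X // φ b ≤ t} ≤ #(Set.Iio t) + 1 := h1
          _ ≤ Cardinal.aleph (n : Ordinal) + 1 := by exact add_le_add_left h4 1
          _ = Cardinal.aleph (n : Ordinal) := Cardinal.add_one_eq (aleph0_le_aleph _)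
      choose c' hc' using fun a : X => IH {b : X // φ b ≤ φ a} (hW (φ a))
      have hmaxex : ∀ x : Fin (n + 1 + 1) → X, ∃ i, ∀ m, φ (x m) ≤ φ (x i) :=
        fun x => Finite.exists_max fun i => φ (x i)
      let k : (Fin (n + 1 + 1) → X) → Fin (n + 1 + 1) := fun x => (hmaxex x).choose
      have hk : ∀ (x : Fin (n + 1 + 1) → X) (m : Fin (n + 1 + 1)),
          φ (x m) ≤ φ (x (k x)) := fun x => (hmaxex x).choose_spec
      let C : X → (Fin (n + 1) → X) → ℕ := fun a y =>
        c' a fun i => if h : φ (y i) ≤ φ a then ⟨y i, h⟩ else ⟨a, le_rfl⟩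
      refine ⟨fun x => Nat.pair (k x).val (C (x (k x)) fun i => x ((k x).succAbove i)), ?_⟩
      intro Y hY j
      by_contra hcon
      push_neg at hcon
      choose x0 hx0 using fun i => (hY i).nonempty
      set K := k x0 with hK
      set a0 := x0 K with ha0
      -- every tuple in the grid has the same max position and same inner color
      have hcomp : ∀ x, (∀ i, x i ∈ Y i) →
          k x = K ∧ C (x (k x)) (fun i => x ((k x).succAbove i))
            = C a0 (fun i => x0 (K.succAbove i)) := by
        intro x hx
        have h1 := (hcon x hx).trans (hcon x0 hx0).symm
        obtain ⟨hv, hc2⟩ := Nat.pair_eq_pair.mp h1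
        exact ⟨Fin.val_injective hv, hc2⟩
      have hsub : ∀ m, m ≠ K → ∀ b ∈ Y m, φ b ≤ φ a0 := by
        intro m hm b hb
        set x : Fin (n + 1 + 1) → X := Function.update x0 m b with hxdef
        have hx : ∀ i, x i ∈ Y i := by
          intro i
          rcases eq_or_ne i m with rfl | h
          · rw [hxdef, Function.update_self]; exact hb
          · rw [hxdef, Function.update_of_ne h]; exact hx0 i
        have hkx : k x = K := (hcomp x hx).1
        have h2 := hk x m
        rw [hkx] at h2
        have hxK : x K = a0 := by rw [hxdef, Function.update_of_ne (Ne.symm hm)]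
        have hxm : x m = b := by rw [hxdef, Function.update_self]
        rwa [hxK, hxm] at h2
      -- transfer the grid to the initial segment below a0
      have hYsub : ∀ i : Fin (n + 1),
          Y (K.succAbove i) ⊆ Set.range (fun b : {b : X // φ b ≤ φ a0} => (b : X)) := by
        intro i b hb
        rw [Subtype.range_coe_subtype]
        exact hsub _ (Fin.succAbove_ne K i) b hb
      have hY' : ∀ i, ((fun b : {b : X // φ b ≤ φ a0} => (b : X)) ⁻¹'
          Y (K.succAbove i)).Infinite :=
        fun i => (hY _).preimage (hYsub i)
      obtain ⟨g, hg, hgne⟩ := hc' a0 _ hY' (C a0 (fun i => x0 (K.succAbove i)))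
      set f : Fin (n + 1 + 1) → X := K.insertNth a0 (fun i => (g i : X)) with hfdef
      have hf : ∀ m, f m ∈ Y m := by
        intro m
        rcases eq_or_ne m K with rfl | hm
        · rw [hfdef, Fin.insertNth_apply_same (α := fun _ => X)]; exact hx0 _
        · obtain ⟨i, rfl⟩ := Fin.exists_succAbove_eq hm
          rw [hfdef, Fin.insertNth_apply_succAbove (α := fun _ => X)]
          exact hg i
      obtain ⟨hkf, hcf⟩ := hcomp f hf
      rw [hkf] at hcf
      have hfK : f K = a0 := by
        rw [hfdef]; exact Fin.insertNth_apply_same (α := fun _ => X) K a0 _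
      rw [hfK] at hcf
      have hCg : C a0 (fun i => f (K.succAbove i)) = c' a0 g := by
        show c' a0 (fun i => if h : φ (f (K.succAbove i)) ≤ φ a0
          then ⟨f (K.succAbove i), h⟩ else ⟨a0, le_rfl⟩) = c' a0 g
        congr 1
        funext i
        have hfs : f (K.succAbove i) = (g i : X) := by
          rw [hfdef]; exact Fin.insertNth_apply_succAbove (α := fun _ => X) K a0 _ i
        rw [hfs, dif_pos (g i).2]
      rw [hCg] at hcf
      exact hgne hcf

/-- If `PG_d(ℵ₀)` holds — every countable coloring of any product of `d` perfect
Polish spaces has a monochromatic somewhere dense grid — then `2^{ℵ₀} ≥ ℵ_d`. -/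
theorem stmt13 (d : ℕ) (hd : 2 ≤ d)
    (hPG : ∀ (X : Fin d → Type) (t : ∀ i, TopologicalSpace (X i)),
      (∀ i, @PolishSpace (X i) (t i)) →
      (∀ i, @Perfect (X i) (t i) Set.univ) →
      (∀ i, Nonempty (X i)) →
      ∀ γ : (∀ i, X i) → ℕ,
        ∃ (j : ℕ) (Y : ∀ i, Set (X i)),
          (∀ i, ∃ V : Set (X i), @IsOpen _ (t i) V ∧ V.Nonempty ∧
            V ⊆ @closure _ (t i) (Y i)) ∧
          {f : ∀ i, X i | ∀ i, f i ∈ Y i} ⊆ γ ⁻¹' {j}) :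
    Cardinal.aleph d ≤ Cardinal.continuum := by
  have h0 : Cardinal.aleph.{0} (d : Ordinal.{0}) ≤ Cardinal.continuum.{0} := by
    by_contra hlt
    push_neg at hlt
    obtain ⟨n, rfl⟩ : ∃ n, d = n + 1 + 1 := ⟨d - 2, by omega⟩
    have hcont : #ℝ ≤ Cardinal.aleph ((n + 1 : ℕ) : Ordinal) := by
      rw [Cardinal.mk_real]
      have hcast : ((n + 1 + 1 : ℕ) : Ordinal) = Order.succ ((n + 1 : ℕ) : Ordinal) := by
        rw [Nat.cast_succ (n := n + 1), Ordinal.add_one_eq_succ]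
      rw [hcast, aleph_succ, Order.lt_succ_iff] at hlt
      exact hlt
    obtain ⟨c, hc⟩ := key_coloring (n + 1) ℝ hcont
    have hPerf : Perfect (Set.univ : Set ℝ) := by
      have : PerfectSpace ℝ := perfectSpace_iff_forall_not_isolated.mpr fun x => inferInstance
      exact PerfectSpace.univ_perfect ℝ
    obtain ⟨j, Y, hYdense, hmono⟩ := hPG (fun _ => ℝ) (fun _ => inferInstance)
        (fun _ => inferInstance) (fun _ => hPerf) (fun _ => inferInstance) c
    have hYinf : ∀ i, (Y i).Infinite := by
      intro i
      obtain ⟨V, hVopen, hVne, hVsub⟩ := hYdense i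
      by_contra hfin
      rw [Set.not_infinite] at hfin
      rw [hfin.isClosed.closure_eq] at hVsub
      obtain ⟨x, hx⟩ := hVne
      obtain ⟨ε, hε, hball⟩ := Metric.isOpen_iff.mp hVopen x hx
      have hIoo : (Set.Ioo (x - ε) (x + ε)).Infinite := Set.Ioo_infinite (by linarith)
      refine hIoo (hfin.subset ?_)
      refine subset_trans ?_ hVsub
      rw [← Real.ball_eq_Ioo]
      exact hball
    obtain ⟨f, hf, hfne⟩ := hc Y hYinf j
    exact hfne (hmono hf)
  calc Cardinal.aleph (d : Ordinal) = Cardinal.lift (Cardinal.aleph.{0} (d : Ordinal.{0})) := by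
        rw [Cardinal.lift_aleph, Ordinal.lift_natCast]
    _ ≤ Cardinal.lift Cardinal.continuum.{0} := Cardinal.lift_le.mpr h0
    _ = Cardinal.continuum := lift_continuum
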